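/- For fixed unit vector θ with μᵀθ < 0, log(2Φ(√(π/2)|s| μᵀθ)) = −(π/4)|s|² (μᵀθ)² + O(log |s|) as |s| → ∞; consequently the centered skew-normal cumulant function satisfies G_{|s|}(θ) = (|s|²/2) θᵀ(Σ − (π/2)μμᵀ)θ + O(|s|). -/

import Mathlib

open MeasureTheory Matrix Real Filter Asymptotics

section SkewAux

open Set

private lemma skewAux_int_exp_Iic (b c : ℝ) (hb : 0 < b) :
    ∫ u in Iic c, Real.exp (b * u) = b⁻¹ * Real.exp (b * c) := by
  have h1 : (∫ x : ℝ in Ioi (-c), Real.exp (-(b * x))) = ∫ u in Iic c, Real.exp (b * u) := by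
    have := integral_comp_neg_Iic c (fun x => Real.exp (-(b * x)))
    simpa [mul_neg, neg_neg] using this.symm
  have h2 := integral_comp_mul_left_Ioi (fun x => Real.exp (-x)) (-c) hb
  rw [← h1, h2, integral_exp_neg_Ioi]
  simp [smul_eq_mul, mul_neg, neg_neg]

private lemma skewAux_gauss_integrable :
    Integrable (fun u : ℝ => (Real.sqrt (2 * π))⁻¹ * Real.exp (-u ^ 2 / 2)) := by
  have h := (integrable_exp_neg_mul_sq (by norm_num : (0:ℝ) < 1/2)).const_mul
      (Real.sqrt (2 * π))⁻¹
  refine h.congr (Filter.Eventually.of_forall fun u => ?_)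
  show (Real.sqrt (2 * π))⁻¹ * Real.exp (-(1/2) * u ^ 2) = _
  rw [show -(1/2 : ℝ) * u ^ 2 = -u ^ 2 / 2 by ring]

private lemma skewAux_gauss_lower (t : ℝ) (ht : t ≤ -1) :
    (Real.sqrt (2 * π))⁻¹ * Real.exp (-t ^ 2 / 2 - 3/2) * (-t)⁻¹
      ≤ ∫ u in Iic t, (Real.sqrt (2 * π))⁻¹ * Real.exp (-u ^ 2 / 2) := by
  have ht0 : t < 0 := lt_of_le_of_lt ht (by norm_num)
  have htne : t ≠ 0 := ht0.ne
  obtain ⟨a, ha_def⟩ : ∃ a : ℝ, a = t + 1/t := ⟨_, rfl⟩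
  have h1t : 1/t < 0 := by exact div_neg_of_pos_of_neg one_pos ht0
  have hat : a ≤ t := by rw [ha_def]; linarith
  have hsq : ∀ u ∈ Ioc a t, u ^ 2 ≤ t ^ 2 + 3 := by
    intro u hu
    have h1 : a < u := hu.1
    have h2 : u ≤ t := hu.2
    have htsq : 1 ≤ t ^ 2 := by nlinarith
    have h1t2 : 1/t^2 ≤ 1 := by
      rw [div_le_one (by positivity)]; exact htsq
    have hua : u ^ 2 ≤ (-a) ^ 2 := by
      apply sq_le_sq' (by linarith) (by rw [ha_def]; nlinarith)
    rw [neg_pow] at hua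
    simp only [neg_one_sq, one_mul, neg_neg] at hua
    have : a ^ 2 = t ^ 2 + 2 + 1/t^2 := by
      rw [ha_def]; field_simp; ring
    nlinarith [hua, this, h1t2]
  have hpt : ∀ u ∈ Ioc a t,
      (Real.sqrt (2 * π))⁻¹ * Real.exp (-t ^ 2 / 2 - 3/2)
        ≤ (Real.sqrt (2 * π))⁻¹ * Real.exp (-u ^ 2 / 2) := by
    intro u hu
    have := hsq u hu
    exact mul_le_mul_of_nonneg_left (Real.exp_le_exp.2 (by linarith)) (by positivity)
  have hmeas : (volume (Ioc a t)).toReal = (-t)⁻¹ := by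
    rw [Real.volume_Ioc, ENNReal.toReal_ofReal (by linarith)]
    rw [ha_def]
    field_simp
    ring
  have hstep1 := setIntegral_ge_of_const_le_real (μ := volume) measurableSet_Ioc
      (by simp [Real.volume_Ioc]) hpt (skewAux_gauss_integrable.integrableOn)
  rw [measureReal_def, hmeas] at hstep1
  refine le_trans hstep1 ?_
  apply setIntegral_mono_set skewAux_gauss_integrable.integrableOn
  · exact Filter.Eventually.of_forall fun u => by positivity
  · exact HasSubset.Subset.eventuallyLE (Ioc_subset_Iic_self)

private lemma skewAux_exp_mul_integrableOn (b t : ℝ) (hb : 1 ≤ b) (ht : t ≤ 0) :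
    IntegrableOn (fun u : ℝ => Real.exp (b * u)) (Iic t) := by
  apply Integrable.mono (integrableOn_exp_Iic t)
  · exact (Real.measurable_exp.comp (measurable_const.mul measurable_id)).aestronglyMeasurable
  · refine (ae_restrict_iff' measurableSet_Iic).mpr (Filter.Eventually.of_forall fun u hu => ?_)
    simp only [Real.norm_eq_abs, abs_of_pos (Real.exp_pos _)]
    apply Real.exp_le_exp.2
    have hu0 : u ≤ 0 := le_trans hu ht
    nlinarith

private lemma skewAux_gauss_upper (t : ℝ) (ht : t ≤ -1) :
    (∫ u in Iic t, (Real.sqrt (2 * π))⁻¹ * Real.exp (-u ^ 2 / 2))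
      ≤ (Real.sqrt (2 * π))⁻¹ * Real.exp (-t ^ 2 / 2) * (-t)⁻¹ := by
  have ht0 : t < 0 := lt_of_le_of_lt ht (by norm_num)
  have hb : (1:ℝ) ≤ -t := by linarith
  have hb0 : (0:ℝ) < -t := by linarith
  have hpt : ∀ u : ℝ, (Real.sqrt (2 * π))⁻¹ * Real.exp (-u ^ 2 / 2)
      ≤ (Real.sqrt (2 * π))⁻¹ * Real.exp (t ^ 2 / 2) * Real.exp ((-t) * u) := by
    intro u
    rw [mul_assoc, ← Real.exp_add]
    apply mul_le_mul_of_nonneg_left (Real.exp_le_exp.2 (by nlinarith [sq_nonneg (t - u)]))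
      (by positivity)
  have hint : IntegrableOn
      (fun u : ℝ => (Real.sqrt (2 * π))⁻¹ * Real.exp (t ^ 2 / 2) * Real.exp ((-t) * u))
      (Iic t) := (skewAux_exp_mul_integrableOn (-t) t hb ht0.le).const_mul _
  have hmono : (∫ u in Iic t, (Real.sqrt (2 * π))⁻¹ * Real.exp (-u ^ 2 / 2))
      ≤ ∫ u in Iic t, (Real.sqrt (2 * π))⁻¹ * Real.exp (t ^ 2 / 2) * Real.exp ((-t) * u) := by
    apply integral_mono_of_nonneg
    · exact Filter.Eventually.of_forall fun u => by positivity
    · exact hint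
    · exact Filter.Eventually.of_forall fun u => hpt u
  refine hmono.trans (le_of_eq ?_)
  rw [MeasureTheory.integral_const_mul, skewAux_int_exp_Iic (-t) t hb0]
  rw [show (-t) * t = -t^2 by ring]
  rw [show (√(2 * π))⁻¹ * rexp (t ^ 2 / 2) * ((-t)⁻¹ * rexp (-t ^ 2))
      = (√(2 * π))⁻¹ * (rexp (t ^ 2 / 2) * rexp (-t ^ 2)) * (-t)⁻¹ by ring, ← Real.exp_add]
  norm_num [show t ^ 2 / 2 + -t ^ 2 = -t ^ 2 / 2 by ring]

end SkewAux

/-- Large-radius behaviour of the centered skew-normal cumulant function along a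
direction with `μᵀθ < 0`:
`log (2Φ(√(π/2) r μᵀθ)) = −(π/4) r² (μᵀθ)² + O(log r)` and consequently
`G_r(θ) = (r²/2) θᵀ(S − (π/2)μμᵀ)θ + O(r)` as `r → ∞`. -/
theorem skew_normal_cumulant_large_radius_neg
    (m : ℕ) (S : Matrix (Fin m) (Fin m) ℝ) (hS : S.PosDef)
    (μ : Fin m → ℝ) (θ : Fin m → ℝ) (hθ : θ ⬝ᵥ θ = 1) (hneg : μ ⬝ᵥ θ < 0)
    (Φ : ℝ → ℝ)
    (hΦ : ∀ t : ℝ, Φ t = ∫ u in Set.Iic t, (Real.sqrt (2 * π))⁻¹ * Real.exp (-u ^ 2 / 2))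
    (G : ℝ → ℝ)
    (hG : ∀ r : ℝ, G r = -(r * (μ ⬝ᵥ θ)) + r ^ 2 / 2 * (θ ⬝ᵥ S.mulVec θ)
        + Real.log (2 * Φ (Real.sqrt (π / 2) * r * (μ ⬝ᵥ θ)))) :
    ((fun r : ℝ => Real.log (2 * Φ (Real.sqrt (π / 2) * r * (μ ⬝ᵥ θ)))
        + π / 4 * r ^ 2 * (μ ⬝ᵥ θ) ^ 2)
      =O[atTop] (fun r : ℝ => Real.log r)) ∧
    ((fun r : ℝ => G r
        - r ^ 2 / 2 * (θ ⬝ᵥ (S - (π / 2) • Matrix.of fun i j => μ i * μ j).mulVec θ))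
      =O[atTop] (fun r : ℝ => r)) := by
  have hπ : (0:ℝ) < π := Real.pi_pos
  set A : ℝ := μ ⬝ᵥ θ with hA_def
  have hs0 : (0:ℝ) < Real.sqrt (π / 2) := Real.sqrt_pos.2 (by positivity)
  have hs2 : Real.sqrt (π / 2) ^ 2 = π / 2 := Real.sq_sqrt (by positivity)
  set q : ℝ := Real.sqrt (π / 2) * (-A) with hq_def
  have hq0 : 0 < q := mul_pos hs0 (by linarith)
  set E : ℝ := |Real.log (2 * (Real.sqrt (2 * π))⁻¹)| + |Real.log q| + 3/2 with hE_def
  have hE0 : 0 ≤ E := by positivity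
  -- the key pointwise estimate
  have key : ∀ r : ℝ, max (Real.exp 1) q⁻¹ ≤ r →
      |Real.log (2 * Φ (Real.sqrt (π / 2) * r * A)) + π / 4 * r ^ 2 * A ^ 2|
        ≤ (E + 1) * |Real.log r| := by
    intro r hr
    have hre : Real.exp 1 ≤ r := le_trans (le_max_left _ _) hr
    have hr0 : 0 < r := lt_of_lt_of_le (Real.exp_pos 1) hre
    have hlogr : 1 ≤ Real.log r := by
      rw [Real.le_log_iff_exp_le hr0]; exact hre
    have hrq : q⁻¹ ≤ r := le_trans (le_max_right _ _) hr
    have hqr1 : 1 ≤ q * r := by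
      rw [← mul_inv_cancel₀ hq0.ne']
      exact mul_le_mul_of_nonneg_left hrq hq0.le
    set t : ℝ := Real.sqrt (π / 2) * r * A with ht_def
    have htq : t = -(q * r) := by rw [ht_def, hq_def]; ring
    have ht : t ≤ -1 := by rw [htq]; linarith
    have htneg : 0 < -t := by linarith
    have htsq : t ^ 2 / 2 = π / 4 * r ^ 2 * A ^ 2 := by
      rw [ht_def, mul_pow, mul_pow, hs2]; ring
    have hΦt := hΦ t
    have hlow := skewAux_gauss_lower t ht
    have hup := skewAux_gauss_upper t ht
    rw [← hΦt] at hlow hup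
    have hW0 : 0 < 2 * (Real.sqrt (2 * π))⁻¹ * (-t)⁻¹ := by positivity
    have hΦpos : 0 < Φ t := lt_of_lt_of_le (by positivity) hlow
    -- rewrite bounds in factored form
    have h2U : 2 * ((Real.sqrt (2 * π))⁻¹ * Real.exp (-t ^ 2 / 2) * (-t)⁻¹)
        = (2 * (Real.sqrt (2 * π))⁻¹ * (-t)⁻¹) * Real.exp (-t ^ 2 / 2) := by ring
    have h2L : 2 * ((Real.sqrt (2 * π))⁻¹ * Real.exp (-t ^ 2 / 2 - 3/2) * (-t)⁻¹)
        = (2 * (Real.sqrt (2 * π))⁻¹ * (-t)⁻¹) * Real.exp (-t ^ 2 / 2 - 3/2) := by ring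
    have hlogU : Real.log (2 * Φ t)
        ≤ Real.log (2 * (Real.sqrt (2 * π))⁻¹ * (-t)⁻¹) + (-t ^ 2 / 2) := by
      calc Real.log (2 * Φ t)
          ≤ Real.log ((2 * (Real.sqrt (2 * π))⁻¹ * (-t)⁻¹) * Real.exp (-t ^ 2 / 2)) := by
            apply Real.log_le_log (by positivity)
            rw [← h2U]; linarith
        _ = _ := by rw [Real.log_mul hW0.ne' (Real.exp_pos _).ne', Real.log_exp]
    have hlogL : Real.log (2 * (Real.sqrt (2 * π))⁻¹ * (-t)⁻¹) + (-t ^ 2 / 2 - 3/2)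
        ≤ Real.log (2 * Φ t) := by
      calc Real.log (2 * (Real.sqrt (2 * π))⁻¹ * (-t)⁻¹) + (-t ^ 2 / 2 - 3/2)
          = Real.log ((2 * (Real.sqrt (2 * π))⁻¹ * (-t)⁻¹)
              * Real.exp (-t ^ 2 / 2 - 3/2)) := by
            rw [Real.log_mul hW0.ne' (Real.exp_pos _).ne', Real.log_exp]
        _ ≤ Real.log (2 * Φ t) := by
            apply Real.log_le_log (by positivity)
            rw [← h2L]; linarith
    -- estimate log W
    have hlogW : Real.log (2 * (Real.sqrt (2 * π))⁻¹ * (-t)⁻¹)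
        = Real.log (2 * (Real.sqrt (2 * π))⁻¹) - Real.log q - Real.log r := by
      have h2s : (2 * (Real.sqrt (2 * π))⁻¹ : ℝ) ≠ 0 := by positivity
      rw [Real.log_mul h2s (by positivity : ((-t)⁻¹ : ℝ) ≠ 0), Real.log_inv]
      rw [show -t = q * r by rw [htq]; ring, Real.log_mul hq0.ne' hr0.ne']
      ring
    have habs : |Real.log (2 * Φ t) + t ^ 2 / 2| ≤ E + Real.log r := by
      rw [abs_le]
      constructor
      · rw [hlogW] at hlogL
        have h1 : -|Real.log (2 * (Real.sqrt (2 * π))⁻¹)|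
            ≤ Real.log (2 * (Real.sqrt (2 * π))⁻¹) := neg_abs_le _
        have h2 : Real.log q ≤ |Real.log q| := le_abs_self _
        rw [hE_def]
        linarith
      · rw [hlogW] at hlogU
        have h1 : Real.log (2 * (Real.sqrt (2 * π))⁻¹)
            ≤ |Real.log (2 * (Real.sqrt (2 * π))⁻¹)| := le_abs_self _
        have h2 : -|Real.log q| ≤ Real.log q := neg_abs_le _
        rw [hE_def]
        linarith
    have hfin : |Real.log (2 * Φ t) + t ^ 2 / 2| ≤ (E + 1) * Real.log r := by
      refine habs.trans ?_
      have hEE : E * 1 ≤ E * Real.log r := mul_le_mul_of_nonneg_left hlogr hE0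
      linarith
    rw [← htsq, abs_of_nonneg (by linarith : (0:ℝ) ≤ Real.log r)]
    exact hfin
  have part1 : (fun r : ℝ => Real.log (2 * Φ (Real.sqrt (π / 2) * r * A))
      + π / 4 * r ^ 2 * A ^ 2) =O[atTop] (fun r : ℝ => Real.log r) := by
    rw [isBigO_iff]
    refine ⟨E + 1, ?_⟩
    filter_upwards [eventually_ge_atTop (max (Real.exp 1) q⁻¹)] with r hr
    simpa [Real.norm_eq_abs] using key r hr
  refine ⟨part1, ?_⟩
  -- quadratic form identity
  have hQ : θ ⬝ᵥ (S - (π / 2) • Matrix.of fun i j => μ i * μ j).mulVec θ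
      = θ ⬝ᵥ S.mulVec θ - π / 2 * A ^ 2 := by
    rw [Matrix.sub_mulVec, Matrix.smul_mulVec, dotProduct_sub, dotProduct_smul]
    have hM : (Matrix.of fun i j => μ i * μ j).mulVec θ = fun i => μ i * (μ ⬝ᵥ θ) := by
      funext i; simp [Matrix.mulVec, dotProduct, Finset.mul_sum, mul_assoc]
    rw [hM]
    have h2 : θ ⬝ᵥ (fun i => μ i * (μ ⬝ᵥ θ)) = (θ ⬝ᵥ μ) * (μ ⬝ᵥ θ) := by
      simp [dotProduct, Finset.sum_mul, mul_assoc]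
    rw [h2, dotProduct_comm θ μ, smul_eq_mul, ← hA_def]
    ring
  have heq : (fun r : ℝ => G r
      - r ^ 2 / 2 * (θ ⬝ᵥ (S - (π / 2) • Matrix.of fun i j => μ i * μ j).mulVec θ))
      = fun r : ℝ => (-A) * r + (Real.log (2 * Φ (Real.sqrt (π / 2) * r * A))
          + π / 4 * r ^ 2 * A ^ 2) := by
    funext r
    rw [hG r, hQ]
    ring
  rw [heq]
  have hO1 : (fun r : ℝ => (-A) * r) =O[atTop] (fun r : ℝ => r) :=
    (isBigO_refl (fun r : ℝ => r) atTop).const_mul_left (-A)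
  have hO2 : (fun r : ℝ => Real.log (2 * Φ (Real.sqrt (π / 2) * r * A))
      + π / 4 * r ^ 2 * A ^ 2) =O[atTop] (fun r : ℝ => r) :=
    part1.trans (Real.isLittleO_log_id_atTop.isBigO)
  exact hO1.add hO2
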